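/- If a segment vw intersects a Delaunay edge ab of a point sample, and neither v nor w lies inside either of the two circumscribing disks of the Delaunay triangles adjacent to ab, then every disk through v and w contains a or b; hence vw cannot be a Delaunay edge of any superset containing v, w, a, b. -/

import Mathlib

set_option maxHeartbeats 1000000


/-- Let `ab` be a Delaunay edge of a planar point sample, adjacent to triangles `abc` and
`abd` whose circumdisks (centers `o₁, o₂`, radii `r₁, r₂`) are empty of sample points (in
particular `d` is not inside the circumdisk of `abc` and `c` is not inside that of `abd`).
If a segment `vw` crosses the segment `ab` (they meet at a point strictly between `v,w`
and strictly between `a,b`) and neither `v` nor `w` lies inside either circumdisk (both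
lie strictly outside), then every disk having `v` and `w` on its boundary contains `a` or
`b` in its interior — hence `vw` cannot be a Delaunay edge of any superset containing
`v, w, a, b`. -/
theorem crossing_segment_disk_contains_endpoint
    (a b c d v w : EuclideanSpace ℝ (Fin 2)) (hab : a ≠ b)
    (o₁ o₂ : EuclideanSpace ℝ (Fin 2)) (r₁ r₂ : ℝ)
    (h₁a : dist o₁ a = r₁) (h₁b : dist o₁ b = r₁) (h₁c : dist o₁ c = r₁)
    (h₂a : dist o₂ a = r₂) (h₂b : dist o₂ b = r₂) (h₂d : dist o₂ d = r₂)
    (hd : r₁ ≤ dist o₁ d) (hc : r₂ ≤ dist o₂ c)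
    (hv₁ : r₁ < dist o₁ v) (hw₁ : r₁ < dist o₁ w)
    (hv₂ : r₂ < dist o₂ v) (hw₂ : r₂ < dist o₂ w)
    (hcross : ∃ y : EuclideanSpace ℝ (Fin 2), Sbtw ℝ v y w ∧ Sbtw ℝ a y b) :
    ∀ (o : EuclideanSpace ℝ (Fin 2)) (ρ : ℝ),
      dist o v = ρ → dist o w = ρ → dist o a < ρ ∨ dist o b < ρ := by
  intro o ρ hv hw
  by_contra hcon
  push_neg at hcon
  obtain ⟨ha, hb⟩ := hcon
  obtain ⟨y, hyvw, hyab⟩ := hcross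
  set F : EuclideanSpace ℝ (Fin 2) → ℝ :=
    fun x => dist o x ^ 2 - ρ ^ 2 - (dist o₁ x ^ 2 - r₁ ^ 2) with hF
  have hlin : ∀ p : EuclideanSpace ℝ (Fin 2),
      F p = 2 * inner ℝ (o₁ - o) p + (‖o‖ ^ 2 - ρ ^ 2 - ‖o₁‖ ^ 2 + r₁ ^ 2) := by
    intro p
    simp only [hF, dist_eq_norm]
    rw [@norm_sub_sq_real, @norm_sub_sq_real, inner_sub_left]
    ring
  have key : ∀ (s t : ℝ) (x z : EuclideanSpace ℝ (Fin 2)), s + t = 1 →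
      F (s • x + t • z) = s * F x + t * F z := by
    intro s t x z hst
    have hts : s = 1 - t := by linarith
    subst hts
    rw [hlin, hlin, hlin, inner_add_right, inner_smul_right, inner_smul_right]
    ring
  have hρ : 0 ≤ ρ := hv ▸ dist_nonneg
  have hr₁ : 0 ≤ r₁ := h₁a ▸ dist_nonneg
  -- F y ≥ 0 from segment a b
  obtain ⟨s, t, hs, ht, hst, hy⟩ := mem_segment_iff_wbtw.mpr hyab.wbtw
  have hFa : 0 ≤ F a := by simp only [hF, h₁a]; nlinarith [dist_nonneg (x := o) (y := a)]
  have hFb : 0 ≤ F b := by simp only [hF, h₁b]; nlinarith [dist_nonneg (x := o) (y := b)]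
  have hFy1 : 0 ≤ F y := by
    rw [← hy, key s t a b hst]
    have h1 := mul_nonneg hs hFa
    have h2 := mul_nonneg ht hFb
    linarith
  -- F y < 0 from segment v w
  obtain ⟨s', t', hs', ht', hst', hy'⟩ := mem_segment_iff_wbtw.mpr hyvw.wbtw
  have hFv : F v < 0 := by simp only [hF, hv]; nlinarith
  have hFw : F w < 0 := by simp only [hF, hw]; nlinarith
  have hFy2 : F y < 0 := by
    rw [← hy', key s' t' v w hst']
    rcases lt_or_eq_of_le hs' with h | h
    · have h1 : s' * F v < 0 := mul_neg_of_pos_of_neg h hFv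
      have h2 : t' * F w ≤ 0 := mul_nonpos_of_nonneg_of_nonpos ht' hFw.le
      linarith
    · have h1 : t' * F w < 0 := by
        have ht1 : t' = 1 := by linarith
        rw [ht1, one_mul]; exact hFw
      have h2 : s' * F v = 0 := by rw [← h, zero_mul]
      linarith
  linarith
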